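/- arXiv:1611.02953 — 4 statements merged into one kernel-verified Lean document; each statement's English description precedes it below -/
import Mathlib

section
/- Let K be a field of characteristic zero, let c ∈ K, and let ε ∈ K satisfy ε = 1 or ε = -1. Let G = Σ_k a_k u^k be a nonzero formal power series in K[[u]] of order m (so a_m ≠ 0 and a_k = 0 for k < m). If exp(-c·u)·G(-u) = ε·exp(c·u)·G(u) as formal power series, then the sub-leading coefficient satisfies a_{m+1} = -c·a_m. -/
open PowerSeries

private lemma aux_coeff_exp_mul
    {K : Type*} [Field K] [CharZero K] (r : K) (H : PowerSeries K) (m : ℕ)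
    (h0 : ∀ j < m, coeff j H = 0) :
    coeff m (rescale r (exp K) * H) = coeff m H ∧
    coeff (m + 1) (rescale r (exp K) * H)
      = r * coeff m H + coeff (m + 1) H := by
  constructor
  · rw [coeff_mul, Finset.Nat.sum_antidiagonal_eq_sum_range_succ_mk,
      Finset.sum_eq_single 0]
    · simp [coeff_rescale, coeff_exp]
    · intro k hk hk0
      have : m - k < m := Nat.sub_lt_self (Nat.pos_of_ne_zero hk0)
        (Nat.lt_succ_iff.mp (Finset.mem_range.mp hk))
      simp [h0 _ this]
    · simp
  · rw [coeff_mul, Finset.Nat.sum_antidiagonal_eq_sum_range_succ_mk]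
    have hpeel : ∀ k ∈ Finset.range (m + 1).succ, k ≠ 0 ∧ k ≠ 1 →
        coeff (k, m + 1 - k).1 (rescale r (exp K))
          * coeff (k, m + 1 - k).2 H = 0 := by
      intro k hk ⟨hk0, hk1⟩
      have hk2 : 2 ≤ k := by omega
      have : m + 1 - k < m := by
        have : k ≤ m + 1 := Nat.lt_succ_iff.mp (Finset.mem_range.mp hk)
        omega
      simp [h0 _ this]
    rw [Finset.sum_eq_add_of_mem 0 1 (by simp) (by simp) (by norm_num) hpeel]
    simp [coeff_rescale, coeff_exp]
    ring

/-- If `G = Σ aₖ uᵏ ∈ K⟦u⟧` is nonzero of order `m` and satisfies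
`exp(-c·u)·G(-u) = ε·exp(c·u)·G(u)` with `ε = ±1`, then `a_{m+1} = -c·a_m`. -/
theorem subleading_coeff_eq
    {K : Type*} [Field K] [CharZero K] (c ε : K) (hε : ε = 1 ∨ ε = -1)
    (G : PowerSeries K) (hG : G ≠ 0) (m : ℕ) (hm : G.order = (m : ℕ∞))
    (hfe : rescale (-c) (exp K) * rescale (-1) G
         = C ε * (rescale c (exp K) * G)) :
    coeff (m + 1) G = -c * coeff m G := by
  obtain ⟨ham, h0⟩ := PowerSeries.order_eq_nat.mp hm
  have h0' : ∀ j < m, coeff j (rescale (-1) G) = 0 := by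
    intro j hj; simp [coeff_rescale, h0 j hj]
  obtain ⟨L0, L1⟩ := aux_coeff_exp_mul (-c) (rescale (-1) G) m h0'
  obtain ⟨R0, R1⟩ := aux_coeff_exp_mul c G m h0
  have e1 := congrArg (coeff m) hfe
  have e2 := congrArg (coeff (m + 1)) hfe
  rw [coeff_C_mul] at e1 e2
  rw [L0, R0, coeff_rescale] at e1
  rw [L1, R1, coeff_rescale, coeff_rescale] at e2
  -- e1 : (-1)^m * a_m = ε * a_m, so ε = (-1)^m
  have hs : ((-1 : K) ^ m) ≠ 0 := by
    simp
  have hε' : ε = (-1 : K) ^ m := by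
    have := mul_right_cancel₀ ham (e1.symm.trans rfl)
    exact this
  subst hε'
  -- e2 : -c * ((-1)^m * a_m) + (-1)^(m+1) * a_{m+1} = (-1)^m * (c * a_m + a_{m+1})
  have key : ((-1 : K) ^ m) * (coeff (m + 1) G + c * coeff m G) * 2 = 0 := by
    rw [pow_succ] at e2
    linear_combination -e2
  have h2 : (coeff (m + 1) G + c * coeff m G) = 0 := by
    have := mul_eq_zero.mp key
    rcases this with h | h
    · rcases mul_eq_zero.mp h with h' | h'
      · exact absurd h' hs
      · exact h'
    · exact absurd h (by norm_num)
  linear_combination h2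
end

section
/- Let K be a field of characteristic zero, let c ∈ K, and let ε ∈ K satisfy ε = 1 or ε = -1. Let G = Σ_k a_k u^k be a nonzero formal power series in K[[u]] of order m. Suppose exp(-c·u)·G(-u) = ε·exp(c·u)·G(u) as formal power series. Then for every odd positive integer k, a_{m+k} = -Σ_{i=0}^{k-1} (c^{k-i}/(k-i)!)·a_{m+i}. In particular, for odd k the coefficient a_{m+k} is a K-linear combination of the coefficients a_{m+ℓ} with ℓ even, 0 ≤ ℓ < k. -/
open PowerSeries Finset

/-- If `G = Σ aₖ uᵏ ∈ K⟦u⟧` is nonzero of order `m` and satisfies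
`exp(-c·u)·G(-u) = ε·exp(c·u)·G(u)` with `ε = ±1`, then for every odd `k > 0`,
`a_{m+k} = -Σ_{i=0}^{k-1} (c^{k-i}/(k-i)!)·a_{m+i}`; in particular `a_{m+k}` is a
`K`-linear combination of the `a_{m+ℓ}` with `ℓ` even, `0 ≤ ℓ < k`. -/
theorem odd_coeff_formula
    {K : Type*} [Field K] [CharZero K] (c ε : K) (hε : ε = 1 ∨ ε = -1)
    (G : PowerSeries K) (hG : G ≠ 0) (m : ℕ) (hm : G.order = (m : ℕ∞))
    (hfe : rescale (-c) (exp K) * rescale (-1) G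
         = C ε * (rescale c (exp K) * G)) :
    ∀ k : ℕ, Odd k → 0 < k →
      (coeff (m + k) G
        = -∑ i ∈ range k, c ^ (k - i) / (k - i).factorial * coeff (m + i) G)
      ∧ ∃ w : ℕ → K,
          coeff (m + k) G = ∑ ℓ ∈ (range k).filter (fun ℓ => Even ℓ),
            w ℓ * coeff (m + ℓ) G := by
  obtain ⟨ha, hlt⟩ := PowerSeries.order_eq_nat.mp hm
  set F := rescale c (exp K) * G with hF
  have hre : ∀ j, coeff j (rescale c (exp K)) = c ^ j / j.factorial := by
    intro j
    rw [coeff_rescale, coeff_exp]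
    simp [map_div₀, mul_one_div, div_eq_mul_inv]
  have hFe : rescale (-1) F = C ε * F := by
    rw [hF, map_mul, rescale_rescale, mul_neg_one]
    exact hfe
  -- coefficients of F in terms of those of G
  have hcoeff : ∀ k, coeff (m + k) F
      = ∑ i ∈ range (k + 1), c ^ (k - i) / (k - i).factorial * coeff (m + i) G := by
    intro k
    rw [hF, coeff_mul, Finset.Nat.sum_antidiagonal_eq_sum_range_succ_mk]
    have hsub : ∑ j ∈ range (k + 1),
          coeff j (rescale c (exp K)) * coeff (m + k - j) G
        = ∑ j ∈ range (m + k + 1),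
          coeff j (rescale c (exp K)) * coeff (m + k - j) G := by
      apply Finset.sum_subset (Finset.range_subset_range.mpr (by omega))
      intro x hx hx'
      have hx1 : m + k - x < m := by
        simp only [mem_range] at hx hx' ⊢
        omega
      have hz : coeff (m + k - x) G = 0 :=
        PowerSeries.coeff_of_lt_order _ (by rw [hm]; exact_mod_cast hx1)
      rw [hz, mul_zero]
    rw [← hsub]
    rw [← Finset.sum_range_reflect
      (fun i => c ^ (k - i) / (k - i).factorial * coeff (m + i) G) (k + 1)]
    apply Finset.sum_congr rfl
    intro j hj
    rw [mem_range] at hj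
    rw [hre]
    have h1 : k + 1 - 1 - j = k - j := by omega
    have h2 : k - (k - j) = j := by omega
    have h3 : m + k - j = m + (k - j) := by omega
    rw [h1, h2, h3]
  have hbm : coeff m F = coeff m G := by
    have := hcoeff 0
    simpa using this
  have hrel : ∀ n, (-1 : K) ^ n * coeff n F = ε * coeff n F := by
    intro n
    have := congrArg (coeff n) hFe
    rwa [coeff_rescale, coeff_C_mul] at this
  have hε' : ε = (-1 : K) ^ m := by
    have h := hrel m
    rw [hbm] at h
    exact (mul_right_cancel₀ ha h).symm
  have hFodd : ∀ k, Odd k → coeff (m + k) F = 0 := by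
    intro k hk
    have h := hrel (m + k)
    rw [hε', pow_add] at h
    have h2 : (-1 : K) ^ k * coeff (m + k) F = coeff (m + k) F := by
      have hne : ((-1 : K) ^ m) ≠ 0 := pow_ne_zero _ (by norm_num)
      rw [mul_assoc] at h
      exact mul_left_cancel₀ hne h
    rw [hk.neg_one_pow, neg_one_mul] at h2
    exact add_self_eq_zero.mp (neg_eq_iff_add_eq_zero.mp h2)
  -- Part 1
  have key : ∀ k, Odd k → coeff (m + k) G
      = -∑ i ∈ range k, c ^ (k - i) / (k - i).factorial * coeff (m + i) G := by
    intro k hk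
    have h0 := hFodd k hk
    rw [hcoeff k, Finset.sum_range_succ] at h0
    simp only [Nat.sub_self, pow_zero, Nat.factorial_zero, Nat.cast_one, div_one,
      one_mul] at h0
    exact eq_neg_of_add_eq_zero_left (by rw [add_comm]; exact h0)
  -- Part 2 : strong induction, for all n
  have gen : ∀ n, ∃ w : ℕ → K, coeff (m + n) G
      = ∑ ℓ ∈ (range (n + 1)).filter (fun ℓ => Even ℓ), w ℓ * coeff (m + ℓ) G := by
    intro n
    induction n using Nat.strong_induction_on with
    | _ n IH =>
      rcases Nat.even_or_odd n with he | ho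
      · refine ⟨fun ℓ => if ℓ = n then 1 else 0, ?_⟩
        simp only [ite_mul, one_mul, zero_mul, Finset.sum_ite_eq', mem_filter, mem_range]
        simp [he]
      · have hkey := key n ho
        have H : ∀ i, ∃ w : ℕ → K, i < n → coeff (m + i) G
            = ∑ ℓ ∈ (range (i + 1)).filter (fun ℓ => Even ℓ), w ℓ * coeff (m + ℓ) G := by
          intro i
          by_cases hi : i < n
          · exact ⟨(IH i hi).choose, fun _ => (IH i hi).choose_spec⟩
          · exact ⟨0, fun h => absurd h hi⟩
        choose w hw using H
        refine ⟨fun ℓ => ∑ i ∈ range n,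
          if ℓ ≤ i then -(c ^ (n - i) / (n - i).factorial) * w i ℓ else 0, ?_⟩
        have hE : (range (n + 1)).filter (fun ℓ => Even ℓ)
            = (range n).filter (fun ℓ => Even ℓ) := by
          ext ℓ
          simp only [mem_filter, mem_range]
          have hno := Nat.odd_iff.mp ho
          constructor
          · rintro ⟨h1, h2⟩
            exact ⟨by have := Nat.even_iff.mp h2; omega, h2⟩
          · rintro ⟨h1, h2⟩
            exact ⟨by omega, h2⟩
        rw [hE, hkey, ← Finset.sum_neg_distrib]
        have step : ∀ i ∈ range n,
            -(c ^ (n - i) / (n - i).factorial * coeff (m + i) G)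
            = ∑ ℓ ∈ (range n).filter (fun ℓ => Even ℓ),
                (if ℓ ≤ i then -(c ^ (n - i) / (n - i).factorial) * w i ℓ else 0)
                  * coeff (m + ℓ) G := by
          intro i hi
          rw [mem_range] at hi
          rw [hw i hi]
          have hEi : (range (i + 1)).filter (fun ℓ => Even ℓ)
              = ((range n).filter (fun ℓ => Even ℓ)).filter (fun ℓ => ℓ ≤ i) := by
            ext ℓ
            simp only [mem_filter, mem_range]
            constructor
            · rintro ⟨h1, h2⟩
              exact ⟨⟨by omega, h2⟩, by omega⟩
            · rintro ⟨⟨h1, h2⟩, h3⟩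
              exact ⟨by omega, h2⟩
          rw [hEi, Finset.mul_sum, ← Finset.sum_neg_distrib, Finset.sum_filter]
          apply Finset.sum_congr rfl
          intro ℓ _
          by_cases hli : ℓ ≤ i
          · simp only [if_pos hli]; ring
          · simp [hli]
        rw [Finset.sum_congr rfl step, Finset.sum_comm]
        apply Finset.sum_congr rfl
        intro ℓ _
        rw [Finset.sum_mul]
  intro k hk hk0
  refine ⟨key k hk, ?_⟩
  obtain ⟨w, hw⟩ := gen k
  have hE : (range (k + 1)).filter (fun ℓ => Even ℓ)
      = (range k).filter (fun ℓ => Even ℓ) := by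
    ext ℓ
    simp only [mem_filter, mem_range]
    have hko := Nat.odd_iff.mp hk
    constructor
    · rintro ⟨h1, h2⟩
      exact ⟨by have := Nat.even_iff.mp h2; omega, h2⟩
    · rintro ⟨h1, h2⟩
      exact ⟨by omega, h2⟩
  exact ⟨w, by rw [hw, hE]⟩
end

section
/- Let K be a field of characteristic zero, let q ∈ K, and let ε ∈ K satisfy ε = 1 or ε = -1. Let σ denote the formal power series σ(T) = Σ_{k≥1} (-1)^k T^k in K[[T]]. Let F = Σ_k c_k T^k be a nonzero formal power series in K[[T]] of order m. If F∘σ = ε·exp(q·log(1+T))·F as formal power series, then the sub-leading coefficient satisfies c_{m+1} = -(c_m/2)·(q + m). -/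
open PowerSeries Finset

/-- `σ(T) = Σ_{k≥1} (-1)^k T^k = (1+T)⁻¹ - 1`. -/
noncomputable def sigma (K : Type*) [Ring K] : PowerSeries K :=
  PowerSeries.mk fun k => if k = 0 then 0 else (-1) ^ k

/-- Substitution `f ∘ g` of a power series `g` with zero constant term
into a power series `f`: the `n`-th coefficient is `Σ_{j≤n} fⱼ · coeff n (g^j)`. -/
noncomputable def PowerSeries.comp {K : Type*} [CommSemiring K]
    (f g : PowerSeries K) : PowerSeries K :=
  PowerSeries.mk fun n => ∑ j ∈ range (n + 1), coeff j f * coeff n (g ^ j)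

/-- `log(1+T) = Σ_{k≥1} (-1)^{k+1} T^k / k`. -/
noncomputable def logOneAdd (K : Type*) [Field K] [CharZero K] : PowerSeries K :=
  PowerSeries.mk fun k => if k = 0 then 0 else (-1) ^ (k + 1) / (k : K)

/-- `exp(q·log(1+T)) = Σ_{n≥0} qⁿ·log(1+T)ⁿ/n!`, the formal binomial series `(1+T)^q`. -/
noncomputable def onePlusTPow {K : Type*} [Field K] [CharZero K] (q : K) :
    PowerSeries K :=
  (PowerSeries.exp K).comp (C q * logOneAdd K)

noncomputable def sAux (K : Type*) [Ring K] : PowerSeries K :=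
  PowerSeries.mk fun k => (-1) ^ (k + 1)

lemma sigma_eq (K : Type*) [Ring K] : sigma K = X * sAux K := by
  ext n
  cases n with
  | zero => simp [sigma, sAux]
  | succ n => simp [sigma, sAux, coeff_succ_X_mul]

lemma coeff_sigma_pow_lt {K : Type*} [CommRing K] {n j : ℕ} (h : n < j) :
    coeff n ((sigma K) ^ j) = 0 := by
  have : (X : PowerSeries K) ^ j ∣ (sigma K) ^ j := pow_dvd_pow_of_dvd ⟨sAux K, sigma_eq K⟩ j
  exact X_pow_dvd_iff.mp this n h

lemma coeff_sigma_pow_self {K : Type*} [CommRing K] (j : ℕ) :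
    coeff j ((sigma K) ^ j) = (-1) ^ j := by
  rw [sigma_eq, mul_pow]
  have := coeff_X_pow_mul ((sAux K) ^ j) j 0
  rw [zero_add] at this
  rw [this, coeff_zero_eq_constantCoeff, map_pow]
  simp [sAux, constantCoeff_mk]

lemma coeff_one_sAux_pow {K : Type*} [CommRing K] (j : ℕ) :
    coeff 1 ((sAux K) ^ j) = (-1) ^ (j + 1) * j := by
  induction j with
  | zero => simp
  | succ j ih =>
    have h0 : coeff 0 ((sAux K) ^ j) = (-1) ^ j := by
      rw [coeff_zero_eq_constantCoeff, map_pow]; simp [sAux]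
    rw [pow_succ, coeff_mul, Finset.Nat.sum_antidiagonal_eq_sum_range_succ_mk]
    rw [Finset.sum_range_succ, Finset.sum_range_succ, Finset.sum_range_zero]
    have h1 : coeff 1 (sAux K) = 1 := by simp [sAux]
    have h2 : coeff 0 (sAux K) = -1 := by simp [sAux]
    simp only [zero_add, Nat.sub_self, Nat.sub_zero, h1, h2, ih, h0]
    push_cast
    ring

lemma coeff_sigma_pow_succ {K : Type*} [CommRing K] (j : ℕ) :
    coeff (j + 1) ((sigma K) ^ j) = (-1) ^ (j + 1) * j := by
  rw [show j + 1 = 1 + j from Nat.add_comm _ _, sigma_eq, mul_pow, coeff_X_pow_mul,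
    coeff_one_sAux_pow, Nat.add_comm 1 j]

lemma coeff_comp {K : Type*} [CommSemiring K] (f g : PowerSeries K) (n : ℕ) :
    coeff n (f.comp g) = ∑ j ∈ range (n + 1), coeff j f * coeff n (g ^ j) := by
  simp [PowerSeries.comp]

lemma onePlusTPow_coeff_zero {K : Type*} [Field K] [CharZero K] (q : K) :
    coeff 0 (onePlusTPow q) = 1 := by
  rw [onePlusTPow, coeff_comp]
  simp [coeff_exp]

lemma onePlusTPow_coeff_one {K : Type*} [Field K] [CharZero K] (q : K) :
    coeff 1 (onePlusTPow q) = q := by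
  rw [onePlusTPow, coeff_comp, Finset.sum_range_succ, Finset.sum_range_succ,
    Finset.sum_range_zero]
  simp [coeff_exp, logOneAdd]

/-- If `F = Σ cₖ Tᵏ ∈ K⟦T⟧` is nonzero of order `m` and satisfies
`F∘σ = ε·exp(q·log(1+T))·F` with `ε = ±1`, then `c_{m+1} = -(c_m/2)·(q + m)`. -/
theorem subleading_coeff_eq_T
    {K : Type*} [Field K] [CharZero K] (q ε : K) (hε : ε = 1 ∨ ε = -1)
    (F : PowerSeries K) (hF : F ≠ 0) (m : ℕ) (hm : F.order = (m : ℕ∞))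
    (hfe : F.comp (sigma K) = C ε * (onePlusTPow q * F)) :
    coeff (m + 1) F = -(coeff m F / 2) * (q + m) := by
  have hcm : coeff m F ≠ 0 := ((PowerSeries.order_eq_nat).mp hm).1
  have hc0 : ∀ i < m, coeff i F = 0 := ((PowerSeries.order_eq_nat).mp hm).2
  set P := onePlusTPow q with hP
  -- coefficient m of both sides
  have eq1 : coeff m F * (-1 : K) ^ m = ε * coeff m F := by
    have h := congrArg (coeff m) hfe
    rw [coeff_comp, Finset.sum_range_succ, coeff_sigma_pow_self] at h
    rw [Finset.sum_eq_zero (fun j hj => by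
      rw [hc0 j (Finset.mem_range.mp hj), zero_mul]), zero_add] at h
    rw [coeff_C_mul, coeff_mul, Finset.Nat.sum_antidiagonal_eq_sum_range_succ_mk] at h
    rw [Finset.sum_eq_single_of_mem 0 (Finset.mem_range.mpr (Nat.succ_pos m))
      (fun i hi hi0 => by
        have hi' := Nat.lt_succ_iff.mp (Finset.mem_range.mp hi)
        have hmpos : 0 < m := lt_of_lt_of_le (Nat.pos_of_ne_zero hi0) hi'
        rw [hc0 (m - i) (Nat.sub_lt hmpos (Nat.pos_of_ne_zero hi0)), mul_zero])] at h
    rw [Nat.sub_zero, onePlusTPow_coeff_zero, one_mul] at h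
    exact h
  have eq2 : coeff m F * ((-1 : K) ^ (m + 1) * m) + coeff (m + 1) F * (-1 : K) ^ (m + 1)
      = ε * (coeff (m + 1) F + q * coeff m F) := by
    have h := congrArg (coeff (m + 1)) hfe
    rw [coeff_comp, Finset.sum_range_succ, Finset.sum_range_succ] at h
    rw [Finset.sum_eq_zero (fun j hj => by
      rw [hc0 j (Finset.mem_range.mp hj), zero_mul]), zero_add,
      coeff_sigma_pow_succ, coeff_sigma_pow_self] at h
    rw [coeff_C_mul, coeff_mul, Finset.Nat.sum_antidiagonal_eq_sum_range_succ_mk,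
      Finset.sum_range_succ', Finset.sum_range_succ'] at h
    rw [Finset.sum_eq_zero (fun i hi => by
      have hi' := Finset.mem_range.mp hi
      have hlt : m + 1 - (i + 1 + 1) < m := by omega
      rw [hc0 _ hlt, mul_zero])] at h
    simp only [Nat.sub_zero, zero_add, Nat.add_sub_cancel, zero_add] at h
    rw [onePlusTPow_coeff_zero, onePlusTPow_coeff_one, one_mul] at h
    linear_combination h
  have hε' : (-1 : K) ^ m = ε := by
    rw [mul_comm] at eq1
    exact mul_right_cancel₀ hcm eq1
  rw [← hε'] at eq2
  have he : ((-1 : K) ^ m) * ((-1 : K) ^ m) = 1 := by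
    rw [← pow_add]
    exact Even.neg_one_pow ⟨m, rfl⟩
  have goal' : (2 : K) * coeff (m + 1) F = -(q + m) * coeff m F := by
    linear_combination (-(-1 : K) ^ m) * eq2 +
      (-(((m : K)) * coeff m F + 2 * coeff (m + 1) F + q * coeff m F)) * he
  linear_combination goal' / 2
end

section
/- Let p be a prime, let f = Σ_j a_j T^j ∈ ℤ_p[[T]], and define b_k = (-1)^k·Σ_{i=0}^{k-1} binomial(k-1, i)·a_{i+1} for k ≥ 1 (the coefficients of f∘σ, where σ(T) = Σ_{k≥1}(-1)^k T^k). Let k ≥ 1 and let n be a natural number such that p^n divides a_k, p^{n+1} does not divide a_k, and p^{n+1} divides a_j for every j with 1 ≤ j < k. Then p^n divides b_k and p^{n+1} does not divide b_k; that is, the p-adic valuation of b_k equals the p-adic valuation of a_k. -/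
open PowerSeries Finset

lemma padic_val_eq_of_dvd_not_dvd {p : ℕ} [Fact p.Prime] {x : ℤ_[p]} {n : ℕ}
    (h1 : (p : ℤ_[p]) ^ n ∣ x) (h2 : ¬ (p : ℤ_[p]) ^ (n + 1) ∣ x) :
    x.valuation = n := by
  have hx : x ≠ 0 := by rintro rfl; exact h2 (dvd_zero _)
  have hle : (n : ℤ) ≤ x.valuation := by
    rw [Nat.cast_le, ← PadicInt.mem_span_pow_iff_le_valuation x hx, Ideal.mem_span_singleton]
    exact h1
  have hlt : ¬ ((n + 1 : ℕ) : ℤ) ≤ x.valuation := by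
    rw [Nat.cast_le, ← PadicInt.mem_span_pow_iff_le_valuation x hx, Ideal.mem_span_singleton]
    exact h2
  push_cast at hlt ⊢
  omega

/-- let `a : ℕ → ℤ_p` be the coefficients of `f ∈ ℤ_p⟦T⟧` and let
`bₖ = (-1)^k·Σ_{i=0}^{k-1} C(k-1, i)·a_{i+1}` for `k ≥ 1` (the coefficients of `f∘σ`).
If `k ≥ 1`, `p^n ∣ aₖ`, `p^{n+1} ∤ aₖ` and `p^{n+1} ∣ aⱼ` for all `1 ≤ j < k`, then
`p^n ∣ bₖ` and `p^{n+1} ∤ bₖ`, i.e. `νₚ(bₖ) = νₚ(aₖ)`. -/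
theorem padic_valuation_eq_comp_sigma (p : ℕ) [Fact p.Prime]
    (f : PowerSeries ℤ_[p]) (a b : ℕ → ℤ_[p])
    (ha : ∀ j, a j = coeff j f)
    (hbk : ∀ k, 1 ≤ k →
      b k = (-1) ^ k * ∑ i ∈ range k, ((k - 1).choose i : ℤ_[p]) * a (i + 1))
    (k n : ℕ) (hk : 1 ≤ k)
    (h1 : (p : ℤ_[p]) ^ n ∣ a k)
    (h2 : ¬ (p : ℤ_[p]) ^ (n + 1) ∣ a k)
    (h3 : ∀ j, 1 ≤ j → j < k → (p : ℤ_[p]) ^ (n + 1) ∣ a j) :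
    ((p : ℤ_[p]) ^ n ∣ b k ∧ ¬ (p : ℤ_[p]) ^ (n + 1) ∣ b k) ∧
    (b k).valuation = (a k).valuation := by
  obtain ⟨m, rfl⟩ : ∃ m, k = m + 1 := ⟨k - 1, by omega⟩
  have hsum : (p : ℤ_[p]) ^ (n + 1) ∣
      ∑ i ∈ range m, ((m + 1 - 1).choose i : ℤ_[p]) * a (i + 1) := by
    apply Finset.dvd_sum
    intro i hi
    exact Dvd.dvd.mul_left (h3 (i + 1) (by omega) (by simp at hi; omega)) _
  have hb : b (m + 1) = (-1) ^ (m + 1) *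
      ((∑ i ∈ range m, ((m + 1 - 1).choose i : ℤ_[p]) * a (i + 1)) + a (m + 1)) := by
    rw [hbk (m + 1) (by omega), Finset.sum_range_succ]
    simp
  have hd1 : (p : ℤ_[p]) ^ n ∣ b (m + 1) := by
    rw [hb]
    exact Dvd.dvd.mul_left (dvd_add (dvd_trans (pow_dvd_pow _ (by omega)) hsum) h1) _
  have hd2 : ¬ (p : ℤ_[p]) ^ (n + 1) ∣ b (m + 1) := by
    rw [hb]
    intro h
    apply h2
    have hu : IsUnit ((-1 : ℤ_[p]) ^ (m + 1)) := (isUnit_one.neg).pow _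
    have h' := hu.dvd_mul_left.mp h
    have := (dvd_add_right hsum).mp h'
    exact this
  exact ⟨⟨hd1, hd2⟩, by rw [padic_val_eq_of_dvd_not_dvd hd1 hd2,
    padic_val_eq_of_dvd_not_dvd h1 h2]⟩
end
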